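/- Let U and V be Hilbert spaces, B : U × V → ℝ bounded bilinear, T : U → V the operator with (T u, v)_V = B(u, v) for all v. Let U^h ⊆ U be a finite-dimensional subspace and V* := T(U^h) the optimal test space. If u ∈ U and u^h ∈ U^h satisfies B(u^h, v) = B(u, v) for all v ∈ V*, then u^h is a best approximation to u from U^h in the energy norm: ‖u − u^h‖_B ≤ ‖u − w‖_B for all w ∈ U^h, where ‖z‖_B := ‖T z‖_V. -/

import Mathlib

/-- Best approximation property of the AVS-FE/DPG method in the energy norm
`‖z‖_B = ‖T z‖_V`, where the optimal test space is `V* = T(U^h)`. -/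
theorem avs_best_approximation
    {U V : Type*} [NormedAddCommGroup U] [InnerProductSpace ℝ U] [CompleteSpace U]
    [NormedAddCommGroup V] [InnerProductSpace ℝ V] [CompleteSpace V]
    (B : U →L[ℝ] V →L[ℝ] ℝ) (T : U →L[ℝ] V)
    (hT : ∀ u : U, ∀ v : V, inner ℝ (T u) v = B u v)
    (Uh : Submodule ℝ U) [FiniteDimensional ℝ Uh]
    (u : U) (uh : U) (huh : uh ∈ Uh)
    (hgal : ∀ v ∈ T '' (Uh : Set U), B uh v = B u v) :
    ∀ w ∈ Uh, ‖T (u - uh)‖ ≤ ‖T (u - w)‖ := by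
  intro w hw
  have horth : inner ℝ (T (u - uh)) (T (uh - w)) = (0 : ℝ) := by
    have hz : uh - w ∈ Uh := Uh.sub_mem huh hw
    have := hgal (T (uh - w)) ⟨uh - w, hz, rfl⟩
    rw [map_sub, inner_sub_left, hT, hT, this, sub_self]
  have hdecomp : T (u - w) = T (u - uh) + T (uh - w) := by
    rw [← map_add]; congr 1; abel
  have := norm_add_sq_real (T (u - uh)) (T (uh - w))
  rw [horth] at this
  have hle : ‖T (u - uh)‖ ^ 2 ≤ ‖T (u - w)‖ ^ 2 := by
    rw [hdecomp, this]
    nlinarith [sq_nonneg ‖T (uh - w)‖]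
  nlinarith [norm_nonneg (T (u - uh)), norm_nonneg (T (u - w))]
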